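/- For any partition λ of N, the number of standard Young tableaux of shape λ satisfies f^λ = N! · V_ℓ(λ) · W_ℓ(λ), where ℓ = ℓ(λ) is the number of nonzero parts, V_ℓ(λ) = ∏_{1≤i<j≤ℓ}(λ_i − λ_j + j − i) and W_ℓ(λ) = ∏_{i=1}^ℓ 1/(λ_i + ℓ − i)!. -/

import Mathlib

open Finset

/-- The set of cells of the Young diagram of the (1-indexed) partition `l`. -/
def youngCells (l : ℕ → ℕ) : Set (ℕ × ℕ) :=
  {p | 1 ≤ p.1 ∧ 1 ≤ p.2 ∧ p.2 ≤ l p.1}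

/-- `T` is a standard Young tableau of shape `l` with entries `{1,…,N}`:
a bijection from the cells onto `{1,…,N}` which strictly increases along rows
and columns (and is `0` outside the diagram). -/
def IsSYT (l : ℕ → ℕ) (N : ℕ) (T : ℕ × ℕ → ℕ) : Prop :=
  Set.BijOn T (youngCells l) (Set.Icc 1 N) ∧
  (∀ i j : ℕ, (i, j) ∈ youngCells l → (i, j + 1) ∈ youngCells l →
      T (i, j) < T (i, j + 1)) ∧
  (∀ i j : ℕ, (i, j) ∈ youngCells l → (i + 1, j) ∈ youngCells l →
      T (i, j) < T (i + 1, j)) ∧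
  (∀ p : ℕ × ℕ, p ∉ youngCells l → T p = 0)

section Helpers
open Polynomial


lemma leadingCoeff_basisDivisor (a b : ℚ) :
    (Lagrange.basisDivisor a b).leadingCoeff = (a - b)⁻¹ := by
  rw [Lagrange.basisDivisor, leadingCoeff_mul, leadingCoeff_C, (monic_X_sub_C b).leadingCoeff,
    mul_one]

lemma leadingCoeff_basis {ι : Type*} [DecidableEq ι] (s : Finset ι) (x : ι → ℚ) (i : ι) :
    (Lagrange.basis s x i).leadingCoeff = ∏ j ∈ s.erase i, (x i - x j)⁻¹ := by
  rw [Lagrange.basis, leadingCoeff_prod]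
  exact Finset.prod_congr rfl fun j _ => leadingCoeff_basisDivisor _ _

lemma KL {ι : Type*} [DecidableEq ι] (s : Finset ι) (x : ι → ℚ) (hinj : Set.InjOn x s)
    (hs : 2 ≤ s.card) :
    ∑ i ∈ s, x i * (∏ j ∈ s.erase i, (x i - x j))⁻¹ = if s.card = 2 then 1 else 0 := by
  have hdeg : (Polynomial.X : ℚ[X]).degree < s.card := by
    rw [degree_X]; exact_mod_cast lt_of_lt_of_le (by norm_num) hs
  have hX := Lagrange.eq_interpolate (v := x) (f := (Polynomial.X : ℚ[X])) hinj hdeg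
  have h1 := congrArg (fun p => Polynomial.coeff p (s.card - 1)) hX
  simp only [Lagrange.interpolate_apply, Polynomial.finset_sum_coeff, coeff_C_mul] at h1
  have h2 : ∀ i ∈ s, (Lagrange.basis s x i).coeff (s.card - 1)
      = ∏ j ∈ s.erase i, (x i - x j)⁻¹ := by
    intro i hi
    rw [← Lagrange.natDegree_basis hinj hi, Polynomial.coeff_natDegree,
      leadingCoeff_basis]
  rw [Finset.sum_congr rfl (fun i hi => by rw [h2 i hi])] at h1
  have h3 : ∑ i ∈ s, x i * (∏ j ∈ s.erase i, (x i - x j))⁻¹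
      = ∑ i ∈ s, Polynomial.eval (x i) (X : ℚ[X]) * ∏ j ∈ s.erase i, (x i - x j)⁻¹ := by
    simp
  rw [h3, ← h1]
  rcases eq_or_lt_of_le hs with h | h
  · simp [← h, Polynomial.coeff_X, (by omega : 2 - 1 = 1)]
  · rw [Polynomial.coeff_X, if_neg (by omega), if_neg (by omega)]

lemma mini (a b c d : ℚ) (hb : b ≠ 0) (hd : d ≠ 0) :
    a * (b * c) * (d * b)⁻¹ = a * c * d⁻¹ := by
  field_simp

lemma swapLemma {ι : Type*} [DecidableEq ι] (s : Finset ι) (F : ι → Finset ι → ℚ) :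
    ∑ i ∈ s, ∑ D ∈ (s.erase i).powerset, F i D
      = ∑ B ∈ s.powerset, ∑ i ∈ B, F i (B.erase i) := by
  rw [Finset.sum_sigma', Finset.sum_sigma']
  refine Finset.sum_nbij' (fun p => ⟨insert p.1 p.2, p.1⟩) (fun q => ⟨q.2, q.1.erase q.2⟩)
    ?_ ?_ ?_ ?_ ?_
  · rintro ⟨i, D⟩ hp
    simp only [Finset.mem_sigma, Finset.mem_powerset] at hp ⊢
    obtain ⟨hi, hD⟩ := hp
    exact ⟨Finset.insert_subset hi (hD.trans (Finset.erase_subset _ _)),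
      Finset.mem_insert_self _ _⟩
  · rintro ⟨B, i⟩ hq
    simp only [Finset.mem_sigma, Finset.mem_powerset] at hq ⊢
    obtain ⟨hB, hi⟩ := hq
    exact ⟨hB hi, fun j hj => Finset.mem_erase.mpr
      ⟨(Finset.mem_erase.mp hj).1, hB (Finset.mem_erase.mp hj).2⟩⟩
  · rintro ⟨i, D⟩ hp
    simp only [Finset.mem_sigma, Finset.mem_powerset] at hp
    have : i ∉ D := fun h => (Finset.mem_erase.mp (hp.2 h)).1 rfl
    simp [Finset.erase_insert this]
  · rintro ⟨B, i⟩ hq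
    simp only [Finset.mem_sigma, Finset.mem_powerset] at hq
    simp [Finset.insert_erase hq.2]
  · rintro ⟨i, D⟩ hp
    simp only [Finset.mem_sigma, Finset.mem_powerset] at hp
    have : i ∉ D := fun h => (Finset.mem_erase.mp (hp.2 h)).1 rfl
    simp [Finset.erase_insert this]

lemma mini2 (a b e d : ℚ) (hb : b ≠ 0) (hd : d ≠ 0) :
    a * (b * e) * (d * b)⁻¹ = e * (a * d⁻¹) := by
  field_simp

lemma EL {ι : Type*} [DecidableEq ι] (s : Finset ι) (x : ι → ℚ) (hinj : Set.InjOn x s) :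
    ∑ i ∈ s, x i * (∏ j ∈ s.erase i, (x i - x j - 1)) * (∏ j ∈ s.erase i, (x i - x j))⁻¹
      = (∑ i ∈ s, x i) - (s.card.choose 2 : ℚ) := by
  classical
  have hne : ∀ i ∈ s, ∀ t ⊆ s.erase i, (∏ j ∈ t, (x i - x j)) ≠ 0 := by
    intro i hi t ht
    refine Finset.prod_ne_zero_iff.mpr fun j hj => sub_ne_zero_of_ne fun h => ?_
    have hj' := ht hj
    exact (Finset.mem_erase.mp hj').1 (hinj hi (Finset.mem_of_mem_erase hj') h).symm
  have step1 : ∀ i ∈ s,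
      x i * (∏ j ∈ s.erase i, (x i - x j - 1)) * (∏ j ∈ s.erase i, (x i - x j))⁻¹
      = ∑ D ∈ (s.erase i).powerset,
          (-1 : ℚ) ^ D.card * (x i * (∏ j ∈ D, (x i - x j))⁻¹) := by
    intro i hi
    set P := s.erase i with hP
    have hexp : (∏ j ∈ P, (x i - x j - 1)) = ∏ j ∈ P, ((x i - x j) + (-1)) :=
      Finset.prod_congr rfl fun j _ => by ring
    rw [hexp, Finset.prod_add, Finset.mul_sum, Finset.sum_mul]
    refine Finset.sum_nbij' (fun t => P \ t) (fun t => P \ t) ?_ ?_ ?_ ?_ ?_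
    · intro t ht; exact Finset.mem_powerset.mpr (Finset.sdiff_subset)
    · intro t ht; exact Finset.mem_powerset.mpr (Finset.sdiff_subset)
    · intro t ht; exact Finset.sdiff_sdiff_eq_self (Finset.mem_powerset.mp ht)
    · intro t ht; exact Finset.sdiff_sdiff_eq_self (Finset.mem_powerset.mp ht)
    · intro t ht
      have htP : t ⊆ P := Finset.mem_powerset.mp ht
      have h1 : ∏ _j ∈ P \ t, (-1 : ℚ) = (-1) ^ (P \ t).card := by
        rw [Finset.prod_const]
      have h2 : (∏ j ∈ P, (x i - x j)) = (∏ j ∈ P \ t, (x i - x j)) * ∏ j ∈ t, (x i - x j) :=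
        (Finset.prod_sdiff htP).symm
      rw [h1, h2]
      exact mini2 _ _ _ _ (hne i hi t htP) (hne i hi _ (Finset.sdiff_subset))
  rw [Finset.sum_congr rfl step1, swapLemma s
    (fun i D => (-1 : ℚ) ^ D.card * (x i * (∏ j ∈ D, (x i - x j))⁻¹))]
  have inner : ∀ B ∈ s.powerset,
      (∑ i ∈ B, (-1 : ℚ) ^ (B.erase i).card * (x i * (∏ j ∈ B.erase i, (x i - x j))⁻¹))
      = (if B.card = 1 then ∑ i ∈ B, x i else 0) + (if B.card = 2 then -1 else 0) := by
    intro B hB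
    have hBs := Finset.mem_powerset.mp hB
    rcases Nat.lt_or_ge B.card 2 with h2 | h2
    · rcases (by omega : B.card = 0 ∨ B.card = 1) with h | h
      · rw [Finset.card_eq_zero.mp h]; simp
      · obtain ⟨a, ha⟩ := Finset.card_eq_one.mp h
        subst ha; simp
    · have hsum : (∑ i ∈ B, (-1 : ℚ) ^ (B.erase i).card *
          (x i * (∏ j ∈ B.erase i, (x i - x j))⁻¹))
          = (-1 : ℚ) ^ (B.card - 1) * ∑ i ∈ B, x i * (∏ j ∈ B.erase i, (x i - x j))⁻¹ := by
        rw [Finset.mul_sum]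
        refine Finset.sum_congr rfl fun i hi => by
          rw [Finset.card_erase_of_mem hi]
      rw [hsum, KL B x (hinj.mono hBs) h2]
      rcases eq_or_lt_of_le h2 with h | h
      · have hc : B.card = 2 := h.symm
        simp [hc]
      · have hc1 : B.card ≠ 1 := by omega
        have hc2 : B.card ≠ 2 := by omega
        simp [hc1, hc2]
  rw [Finset.sum_congr rfl inner, Finset.sum_add_distrib]
  have part1 : (∑ B ∈ s.powerset, if B.card = 1 then ∑ i ∈ B, x i else 0) = ∑ i ∈ s, x i := by
    rw [← Finset.sum_filter, ← Finset.powersetCard_eq_filter, Finset.powersetCard_one,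
      Finset.sum_map]
    simp
  have part2 : (∑ B ∈ s.powerset, if B.card = 2 then (-1 : ℚ) else 0)
      = -(s.card.choose 2 : ℚ) := by
    rw [← Finset.sum_filter, ← Finset.powersetCard_eq_filter, Finset.sum_const,
      Finset.card_powersetCard]
    simp
  rw [part1, part2]
  ring

end Helpers

lemma mem_youngCells {l : ℕ → ℕ} {i j : ℕ} :
    (i, j) ∈ youngCells l ↔ 1 ≤ i ∧ 1 ≤ j ∧ j ≤ l i := Iff.rfl

def lDec (l : ℕ → ℕ) (r : ℕ) : ℕ → ℕ := fun i => if i = r then l i - 1 else l i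

lemma cells_dec (l : ℕ → ℕ) (r : ℕ) (hr : 1 ≤ l r) :
    youngCells (lDec l r) = youngCells l \ {(r, l r)} := by
  ext ⟨i, j⟩
  simp only [youngCells, lDec, Set.mem_setOf_eq, Set.mem_diff, Set.mem_singleton_iff,
    Prod.mk.injEq]
  by_cases h : i = r
  · subst h
    rw [if_pos rfl]
    omega
  · rw [if_neg h]
    omega

lemma syt_finite (l : ℕ → ℕ) (N ell : ℕ) (hmono : ∀ i j, i ≤ j → l j ≤ l i)
    (hell : ∀ i, 1 ≤ i → 0 < l i → i ≤ ell) :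
    Finite {T : ℕ × ℕ → ℕ // IsSYT l N T} := by
  classical
  set C : Finset (ℕ × ℕ) :=
    (Finset.Icc 1 ell ×ˢ Finset.Icc 1 (l 1)).filter (fun p => p.2 ≤ l p.1) with hC
  have hcells : ∀ p : ℕ × ℕ, p ∈ youngCells l → p ∈ C := by
    rintro ⟨i, j⟩ hp
    rw [mem_youngCells] at hp
    obtain ⟨h1, h2, h3⟩ := hp
    have hi : i ≤ ell := hell i h1 (by omega)
    have hj : j ≤ l 1 := le_trans h3 (hmono 1 i h1)
    simp only [hC, Finset.mem_filter, Finset.mem_product, Finset.mem_Icc]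
    exact ⟨⟨⟨h1, hi⟩, ⟨h2, hj⟩⟩, h3⟩
  have hC2 : ∀ p : ℕ × ℕ, p ∈ C → p ∈ youngCells l := by
    rintro ⟨i, j⟩ hp
    simp only [hC, Finset.mem_filter, Finset.mem_product, Finset.mem_Icc] at hp
    rw [mem_youngCells]
    exact ⟨hp.1.1.1, hp.1.2.1, hp.2⟩
  refine Finite.of_injective
    (fun T => fun c : C => (⟨T.1 c.1, by
      have := T.2.1.mapsTo (hC2 c.1 c.2)
      simp only [Set.mem_Icc] at this
      omega⟩ : Fin (N + 1))) ?_
  intro T S h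
  ext p
  by_cases hp : p ∈ youngCells l
  · have := congrFun h ⟨p, hcells p hp⟩
    exact congrArg Fin.val this
  · rw [T.2.2.2.2 p hp, S.2.2.2.2 p hp]

lemma top_cell {l : ℕ → ℕ} {N ell : ℕ} {T : ℕ × ℕ → ℕ}
    (hmono : ∀ i j, i ≤ j → l j ≤ l i) (hell : ∀ i, 1 ≤ i → (0 < l i ↔ i ≤ ell))
    (hT : IsSYT l N T) (hN : 1 ≤ N) :
    ∃ r, (1 ≤ r ∧ r ≤ ell ∧ l (r + 1) < l r) ∧ T (r, l r) = N := by
  obtain ⟨p, hp, hpT⟩ := hT.1.surjOn (Set.mem_Icc.mpr ⟨hN, le_refl _⟩ : N ∈ Set.Icc 1 N)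
  obtain ⟨i, j⟩ := p
  rw [mem_youngCells] at hp
  obtain ⟨h1, h2, h3⟩ := hp
  have hj : j = l i := by
    by_contra hne
    have hcell : (i, j + 1) ∈ youngCells l := mem_youngCells.mpr ⟨h1, by omega, by omega⟩
    have := hT.2.1 i j (mem_youngCells.mpr ⟨h1, h2, h3⟩) hcell
    have := (hT.1.mapsTo hcell).2
    omega
  have hcorner : l (i + 1) < l i := by
    by_contra hge
    have hcell : (i + 1, j) ∈ youngCells l := mem_youngCells.mpr ⟨by omega, h2, by omega⟩
    have := hT.2.2.1 i j (mem_youngCells.mpr ⟨h1, h2, h3⟩) hcell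
    have := (hT.1.mapsTo hcell).2
    omega
  exact ⟨i, ⟨h1, (hell i h1).mp (by omega), hcorner⟩, by rw [← hj]; exact hpT⟩

lemma down_SYT {l : ℕ → ℕ} {N r : ℕ} {T : ℕ × ℕ → ℕ}
    (hr1 : 1 ≤ r) (hlr : 1 ≤ l r) (hT : IsSYT l N T) (hTr : T (r, l r) = N) (hN : 1 ≤ N) :
    IsSYT (lDec l r) (N - 1) (fun p => if p = (r, l r) then 0 else T p) := by
  have hcd := cells_dec l r hlr
  have hp0 : (r, l r) ∈ youngCells l := mem_youngCells.mpr ⟨hr1, hlr, le_refl _⟩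
  have hsub : youngCells (lDec l r) ⊆ youngCells l := by rw [hcd]; exact Set.diff_subset
  have hne : ∀ p ∈ youngCells (lDec l r), p ≠ (r, l r) := by
    intro p hp; rw [hcd] at hp; exact hp.2
  refine ⟨?_, ?_, ?_, ?_⟩
  · have hbij : Set.BijOn T (youngCells (lDec l r)) (Set.Icc 1 (N - 1)) := by
      refine ⟨?_, hT.1.injOn.mono hsub, ?_⟩
      · intro p hp
        have h1 := hT.1.mapsTo (hsub hp)
        simp only [Set.mem_Icc] at h1 ⊢
        have : T p ≠ N := fun h => hne p hp (hT.1.injOn (hsub hp) hp0 (h.trans hTr.symm))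
        omega
      · intro m hm
        simp only [Set.mem_Icc] at hm
        obtain ⟨p, hp, hpT⟩ := hT.1.surjOn (Set.mem_Icc.mpr ⟨hm.1, by omega⟩ : m ∈ Set.Icc 1 N)
        refine ⟨p, ?_, hpT⟩
        rw [hcd]
        exact ⟨hp, fun h => by rw [h, hTr] at hpT; omega⟩
    exact hbij.congr (fun p hp => by simp only [if_neg (hne p hp)])
  · intro i j h1 h2
    simp only [if_neg (hne _ h1), if_neg (hne _ h2)]
    exact hT.2.1 i j (hsub h1) (hsub h2)
  · intro i j h1 h2
    simp only [if_neg (hne _ h1), if_neg (hne _ h2)]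
    exact hT.2.2.1 i j (hsub h1) (hsub h2)
  · intro p hp
    by_cases h : p = (r, l r)
    · simp only [if_pos h]
    · simp only [if_neg h]
      refine hT.2.2.2 p (fun hmem => hp ?_)
      rw [hcd]; exact ⟨hmem, h⟩

lemma up_SYT {l : ℕ → ℕ} {N r : ℕ} {T' : ℕ × ℕ → ℕ}
    (hr1 : 1 ≤ r) (hlr : 1 ≤ l r) (hcorner : l (r + 1) < l r)
    (hT' : IsSYT (lDec l r) (N - 1) T') (hN : 1 ≤ N) :
    IsSYT l N (fun p => if p = (r, l r) then N else T' p) := by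
  have hcd := cells_dec l r hlr
  have hp0 : (r, l r) ∈ youngCells l := mem_youngCells.mpr ⟨hr1, hlr, le_refl _⟩
  have hsub : youngCells (lDec l r) ⊆ youngCells l := by rw [hcd]; exact Set.diff_subset
  have hmem' : ∀ p ∈ youngCells l, p ≠ (r, l r) → p ∈ youngCells (lDec l r) := by
    intro p hp hne; rw [hcd]; exact ⟨hp, hne⟩
  have hval : ∀ p ∈ youngCells (lDec l r), 1 ≤ T' p ∧ T' p ≤ N - 1 := by
    intro p hp
    have := hT'.1.mapsTo hp
    simp only [Set.mem_Icc] at this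
    exact this
  refine ⟨⟨?_, ?_, ?_⟩, ?_, ?_, ?_⟩
  · intro p hp
    by_cases h : p = (r, l r)
    · simp only [if_pos h]; exact Set.mem_Icc.mpr ⟨hN, le_refl _⟩
    · simp only [if_neg h]
      have := hval p (hmem' p hp h)
      exact Set.mem_Icc.mpr ⟨this.1, by omega⟩
  · intro p hp q hq hpq
    by_cases h : p = (r, l r) <;> by_cases h' : q = (r, l r)
    · rw [h, h']
    · simp only [if_pos h, if_neg h'] at hpq
      have := hval q (hmem' q hq h')
      omega
    · simp only [if_neg h, if_pos h'] at hpq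
      have := hval p (hmem' p hp h)
      omega
    · simp only [if_neg h, if_neg h'] at hpq
      exact hT'.1.injOn (hmem' p hp h) (hmem' q hq h') hpq
  · intro m hm
    simp only [Set.mem_Icc] at hm
    by_cases h : m = N
    · refine ⟨(r, l r), hp0, ?_⟩
      simp [h]
    · obtain ⟨p, hp, hpT⟩ := hT'.1.surjOn (Set.mem_Icc.mpr ⟨hm.1, by omega⟩ :
        m ∈ Set.Icc 1 (N - 1))
      exact ⟨p, hsub hp, by simp only [if_neg (show p ≠ (r, l r) from by rw [hcd] at hp; exact hp.2)]; exact hpT⟩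
  · intro i j h1 h2
    by_cases h : (i, j) = (r, l r)
    · exfalso
      rw [Prod.mk.injEq] at h
      obtain ⟨hi, hj⟩ := h
      subst hi
      subst hj
      rw [mem_youngCells] at h2
      omega
    · by_cases h' : (i, j + 1) = (r, l r)
      · simp only [if_neg h, if_pos h']
        have := hval (i, j) (hmem' _ h1 h)
        omega
      · simp only [if_neg h, if_neg h']
        exact hT'.2.1 i j (hmem' _ h1 h) (hmem' _ h2 h')
  · intro i j h1 h2
    by_cases h : (i, j) = (r, l r)
    · exfalso
      rw [Prod.mk.injEq] at h
      obtain ⟨hi, hj⟩ := h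
      subst hi
      subst hj
      rw [mem_youngCells] at h2
      omega
    · by_cases h' : (i + 1, j) = (r, l r)
      · simp only [if_neg h, if_pos h']
        have := hval (i, j) (hmem' _ h1 h)
        omega
      · simp only [if_neg h, if_neg h']
        exact hT'.2.2.1 i j (hmem' _ h1 h) (hmem' _ h2 h')
  · intro p hp
    simp only [if_neg (show p ≠ (r, l r) from fun h => hp (h ▸ hp0))]
    exact hT'.2.2.2 p (fun h => hp (hsub h))

def Vq (l : ℕ → ℕ) (ell : ℕ) : ℚ :=
  ∏ j ∈ Finset.Icc 1 ell, ∏ i ∈ Finset.Icc 1 (j - 1),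
    ((l i : ℚ) - (l j : ℚ) + (j : ℚ) - (i : ℚ))

def Wq (l : ℕ → ℕ) (ell : ℕ) : ℚ :=
  ∏ i ∈ Finset.Icc 1 ell, (1 : ℚ) / (Nat.factorial (l i + (ell - i)) : ℚ)

def Fq (l : ℕ → ℕ) (ell N : ℕ) : ℚ := (Nat.factorial N : ℚ) * Vq l ell * Wq l ell

def xq (l : ℕ → ℕ) (ell : ℕ) : ℕ → ℚ := fun i => (l i : ℚ) + (ell : ℚ) - (i : ℚ)

lemma Vq_eq (l : ℕ → ℕ) (ell : ℕ) :
    Vq l ell = ∏ j ∈ Finset.Icc 1 ell, ∏ i ∈ Finset.Icc 1 (j - 1),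
      (xq l ell i - xq l ell j) := by
  unfold Vq xq
  exact Finset.prod_congr rfl fun j _ => Finset.prod_congr rfl fun i _ => by ring

lemma Fq_stable (m : ℕ → ℕ) (e K : ℕ) (hm : m (e + 1) = 0) :
    Fq m (e + 1) K = Fq m e K := by
  unfold Fq Vq Wq
  have hIcc : Finset.Icc 1 (e + 1) = insert (e + 1) (Finset.Icc 1 e) := by
    ext i; simp [Finset.mem_Icc]; omega
  have hnot : (e + 1) ∉ Finset.Icc 1 e := by simp
  rw [hIcc, Finset.prod_insert hnot, Finset.prod_insert hnot]
  have hw : (1 : ℚ) / (Nat.factorial (m (e + 1) + (e + 1 - (e + 1))) : ℚ) = 1 := by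
    simp [hm]
  rw [hw, one_mul]
  have hsub : (e + 1) - 1 = e := by omega
  rw [hsub]
  have hWc : ∀ i ∈ Finset.Icc 1 e, (1 : ℚ) / (Nat.factorial (m i + (e + 1 - i)) : ℚ)
      = ((m i + (e - i) + 1 : ℕ) : ℚ)⁻¹ * ((1 : ℚ) / (Nat.factorial (m i + (e - i)) : ℚ)) := by
    intro i hi
    rw [Finset.mem_Icc] at hi
    have h1 : m i + (e + 1 - i) = (m i + (e - i)) + 1 := by omega
    rw [h1, Nat.factorial_succ]
    push_cast
    rw [one_div, one_div, mul_inv]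
  have hVc : ∀ i ∈ Finset.Icc 1 e, ((m i : ℚ) - (m (e + 1) : ℚ) + ((e + 1 : ℕ) : ℚ) - (i : ℚ))
      = ((m i + (e - i) + 1 : ℕ) : ℚ) := by
    intro i hi
    rw [Finset.mem_Icc] at hi
    rw [hm]
    push_cast [Nat.cast_sub hi.2]
    ring
  rw [Finset.prod_congr rfl hVc, Finset.prod_congr rfl hWc, Finset.prod_mul_distrib]
  have hcancel : (∏ i ∈ Finset.Icc 1 e, ((m i + (e - i) + 1 : ℕ) : ℚ)) *
      (∏ i ∈ Finset.Icc 1 e, ((m i + (e - i) + 1 : ℕ) : ℚ)⁻¹) = 1 := by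
    rw [← Finset.prod_mul_distrib]
    exact Finset.prod_eq_one fun i _ => mul_inv_cancel₀ (by positivity)
  linear_combination (Nat.factorial K : ℚ) * (∏ j ∈ Finset.Icc 1 e, ∏ i ∈ Finset.Icc 1 (j - 1),
    ((m i : ℚ) - (m j : ℚ) + (j : ℚ) - (i : ℚ))) *
    (∏ i ∈ Finset.Icc 1 e, ((1 : ℚ) / (Nat.factorial (m i + (e - i)) : ℚ))) * hcancel

lemma Vratio (x x' : ℕ → ℚ) (ell r : ℕ) (hr1 : 1 ≤ r) (hr2 : r ≤ ell)
    (hx' : ∀ i, x' i = x i - (if i = r then 1 else 0))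
    (hxne : ∀ i ∈ Finset.Icc 1 ell, ∀ j ∈ Finset.Icc 1 ell, i ≠ j → x i ≠ x j) :
    ∏ j ∈ Finset.Icc 1 ell, ∏ i ∈ Finset.Icc 1 (j - 1), (x' i - x' j)
      = (∏ j ∈ Finset.Icc 1 ell, ∏ i ∈ Finset.Icc 1 (j - 1), (x i - x j))
        * ((∏ j ∈ (Finset.Icc 1 ell).erase r, (x r - x j - 1))
        * (∏ j ∈ (Finset.Icc 1 ell).erase r, (x r - x j))⁻¹) := by
  have hrIcc : r ∈ Finset.Icc 1 ell := Finset.mem_Icc.mpr ⟨hr1, hr2⟩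
  have hD : (∏ j ∈ (Finset.Icc 1 ell).erase r, (x r - x j)) ≠ 0 := by
    refine Finset.prod_ne_zero_iff.mpr fun j hj => sub_ne_zero_of_ne ?_
    exact hxne r hrIcc j (Finset.mem_of_mem_erase hj) (Ne.symm (Finset.mem_erase.mp hj).1)
  rw [← mul_assoc, eq_mul_inv_iff_mul_eq₀ hD]
  have hsplit1 : ∀ G : ℕ → ℚ, ∏ j ∈ Finset.Icc 1 ell, G j
      = (∏ j ∈ Finset.Icc 1 (r - 1), G j) * G r * ∏ j ∈ Finset.Icc (r + 1) ell, G j := by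
    intro G
    have h1 : Finset.Icc 1 ell = Finset.Icc 1 r ∪ Finset.Icc (r + 1) ell := by
      ext i; simp [Finset.mem_Icc, Finset.mem_union]; omega
    have h2 : Disjoint (Finset.Icc 1 r) (Finset.Icc (r + 1) ell) := by
      rw [Finset.disjoint_left]; intro a ha hb
      rw [Finset.mem_Icc] at ha hb; omega
    have h3 : Finset.Icc 1 r = insert r (Finset.Icc 1 (r - 1)) := by
      ext i; simp [Finset.mem_Icc]; omega
    have h4 : r ∉ Finset.Icc 1 (r - 1) := by rw [Finset.mem_Icc]; omega
    rw [h1, Finset.prod_union h2, h3, Finset.prod_insert h4]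
    ring
  have hsplit2 : ∀ G : ℕ → ℚ, ∏ j ∈ (Finset.Icc 1 ell).erase r, G j
      = (∏ j ∈ Finset.Icc 1 (r - 1), G j) * ∏ j ∈ Finset.Icc (r + 1) ell, G j := by
    intro G
    have h1 : (Finset.Icc 1 ell).erase r = Finset.Icc 1 (r - 1) ∪ Finset.Icc (r + 1) ell := by
      ext i; simp [Finset.mem_Icc, Finset.mem_erase, Finset.mem_union]; omega
    have h2 : Disjoint (Finset.Icc 1 (r - 1)) (Finset.Icc (r + 1) ell) := by
      rw [Finset.disjoint_left]; intro a ha hb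
      rw [Finset.mem_Icc] at ha hb; omega
    rw [h1, Finset.prod_union h2]
  rw [hsplit1 (fun j => ∏ i ∈ Finset.Icc 1 (j - 1), (x' i - x' j)),
    hsplit1 (fun j => ∏ i ∈ Finset.Icc 1 (j - 1), (x i - x j)),
    hsplit2 (fun j => (x r - x j)), hsplit2 (fun j => (x r - x j - 1))]
  have hxeq : ∀ i, i ≠ r → x' i = x i := by
    intro i hi; rw [hx', if_neg hi, sub_zero]
  have hxr : x' r = x r - 1 := by rw [hx', if_pos rfl]
  have pA : (∏ j ∈ Finset.Icc 1 (r - 1), ∏ i ∈ Finset.Icc 1 (j - 1), (x' i - x' j))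
      = ∏ j ∈ Finset.Icc 1 (r - 1), ∏ i ∈ Finset.Icc 1 (j - 1), (x i - x j) := by
    refine Finset.prod_congr rfl fun j hj => Finset.prod_congr rfl fun i hi => ?_
    rw [Finset.mem_Icc] at hj hi
    rw [hxeq i (by omega), hxeq j (by omega)]
  have pr : (∏ i ∈ Finset.Icc 1 (r - 1), (x' i - x' r))
        * (∏ j ∈ Finset.Icc 1 (r - 1), (x r - x j))
      = (∏ i ∈ Finset.Icc 1 (r - 1), (x i - x r))
        * (∏ j ∈ Finset.Icc 1 (r - 1), (x r - x j - 1)) := by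
    rw [← Finset.prod_mul_distrib, ← Finset.prod_mul_distrib]
    refine Finset.prod_congr rfl fun i hi => ?_
    rw [Finset.mem_Icc] at hi
    rw [hxeq i (by omega), hxr]
    ring
  have pB : ∀ j ∈ Finset.Icc (r + 1) ell,
      (∏ i ∈ Finset.Icc 1 (j - 1), (x' i - x' j)) * (x r - x j)
      = (∏ i ∈ Finset.Icc 1 (j - 1), (x i - x j)) * (x r - x j - 1) := by
    intro j hj
    rw [Finset.mem_Icc] at hj
    have hrj : r ∈ Finset.Icc 1 (j - 1) := Finset.mem_Icc.mpr ⟨hr1, by omega⟩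
    have hjr : j ≠ r := by omega
    rw [← Finset.mul_prod_erase _ _ hrj, ← Finset.mul_prod_erase _ (fun i => x i - x j) hrj]
    have herase : (∏ i ∈ (Finset.Icc 1 (j - 1)).erase r, (x' i - x' j))
        = ∏ i ∈ (Finset.Icc 1 (j - 1)).erase r, (x i - x j) := by
      refine Finset.prod_congr rfl fun i hi => ?_
      rw [hxeq i (Finset.mem_erase.mp hi).1, hxeq j hjr]
    rw [herase, hxr, hxeq j hjr]
    ring
  have pB' : (∏ j ∈ Finset.Icc (r + 1) ell, ∏ i ∈ Finset.Icc 1 (j - 1), (x' i - x' j))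
        * (∏ j ∈ Finset.Icc (r + 1) ell, (x r - x j))
      = (∏ j ∈ Finset.Icc (r + 1) ell, ∏ i ∈ Finset.Icc 1 (j - 1), (x i - x j))
        * (∏ j ∈ Finset.Icc (r + 1) ell, (x r - x j - 1)) := by
    rw [← Finset.prod_mul_distrib, ← Finset.prod_mul_distrib]
    exact Finset.prod_congr rfl pB
  rw [pA]
  linear_combination
    ((∏ j ∈ Finset.Icc 1 (r - 1), ∏ i ∈ Finset.Icc 1 (j - 1), (x i - x j)) *
      (∏ j ∈ Finset.Icc (r + 1) ell, ∏ i ∈ Finset.Icc 1 (j - 1), (x' i - x' j)) *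
      (∏ j ∈ Finset.Icc (r + 1) ell, (x r - x j))) * pr
    + ((∏ j ∈ Finset.Icc 1 (r - 1), ∏ i ∈ Finset.Icc 1 (j - 1), (x i - x j)) *
      ((∏ i ∈ Finset.Icc 1 (r - 1), (x i - x r)) *
        (∏ j ∈ Finset.Icc 1 (r - 1), (x r - x j - 1)))) * pB'

lemma one_div_helper (a b : ℚ) (ha : a ≠ 0) (hb : b ≠ 0) : 1 / (a * b) * a = 1 / b := by
  field_simp

lemma Wratio (l : ℕ → ℕ) (ell r : ℕ) (hr1 : 1 ≤ r) (hr2 : r ≤ ell) (hlr : 1 ≤ l r) :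
    Wq (lDec l r) ell = Wq l ell * ((l r + (ell - r) : ℕ) : ℚ) := by
  unfold Wq
  have hrIcc : r ∈ Finset.Icc 1 ell := Finset.mem_Icc.mpr ⟨hr1, hr2⟩
  rw [← Finset.mul_prod_erase _ _ hrIcc, ← Finset.mul_prod_erase _
    (fun i => (1 : ℚ) / (Nat.factorial (l i + (ell - i)) : ℚ)) hrIcc]
  have herase : (∏ i ∈ (Finset.Icc 1 ell).erase r,
        (1 : ℚ) / (Nat.factorial (lDec l r i + (ell - i)) : ℚ))
      = ∏ i ∈ (Finset.Icc 1 ell).erase r,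
        (1 : ℚ) / (Nat.factorial (l i + (ell - i)) : ℚ) := by
    refine Finset.prod_congr rfl fun i hi => ?_
    unfold lDec
    rw [if_neg (Finset.mem_erase.mp hi).1]
  rw [herase]
  have hmain : (1 : ℚ) / (Nat.factorial (lDec l r r + (ell - r)) : ℚ)
      = (1 : ℚ) / (Nat.factorial (l r + (ell - r)) : ℚ) * ((l r + (ell - r) : ℕ) : ℚ) := by
    unfold lDec
    rw [if_pos rfl]
    have h1 : l r + (ell - r) = (l r - 1 + (ell - r)) + 1 := by omega
    rw [h1, Nat.factorial_succ, Nat.cast_mul]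
    have h2 : (Nat.factorial (l r - 1 + (ell - r)) : ℚ) ≠ 0 := by
      exact_mod_cast Nat.factorial_ne_zero _
    have h3 : ((l r - 1 + (ell - r) + 1 : ℕ) : ℚ) ≠ 0 := by positivity
    rw [one_div_helper ((l r - 1 + (ell - r) + 1 : ℕ) : ℚ)
        ((Nat.factorial (l r - 1 + (ell - r)) : ℚ)) h3 h2]
  rw [hmain]
  ring

lemma xq_strict {l : ℕ → ℕ} {ell : ℕ} (hmono : ∀ i j, i ≤ j → l j ≤ l i)
    {i j : ℕ} (hij : i < j) : xq l ell j < xq l ell i := by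
  unfold xq
  have h1 : (l j : ℚ) ≤ l i := Nat.cast_le.mpr (hmono i j (le_of_lt hij))
  have h2 : (i : ℚ) < j := Nat.cast_lt.mpr hij
  linarith

lemma xq_ne {l : ℕ → ℕ} {ell : ℕ} (hmono : ∀ i j, i ≤ j → l j ≤ l i) :
    ∀ i ∈ Finset.Icc 1 ell, ∀ j ∈ Finset.Icc 1 ell, i ≠ j → xq l ell i ≠ xq l ell j := by
  intro i _ j _ hne
  rcases Nat.lt_or_ge i j with h | h
  · exact ne_of_gt (xq_strict hmono h)
  · exact ne_of_lt (xq_strict hmono (by omega))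

lemma Fq_ratio (l : ℕ → ℕ) (ell N r : ℕ)
    (hmono : ∀ i j, i ≤ j → l j ≤ l i)
    (hell : ∀ i, 1 ≤ i → (0 < l i ↔ i ≤ ell))
    (hr1 : 1 ≤ r) (hr2 : r ≤ ell) (hN : 1 ≤ N) :
    Fq (lDec l r) ell (N - 1)
      = Fq l ell N * (N : ℚ)⁻¹ *
        (xq l ell r * (∏ j ∈ (Finset.Icc 1 ell).erase r, (xq l ell r - xq l ell j - 1))
          * (∏ j ∈ (Finset.Icc 1 ell).erase r, (xq l ell r - xq l ell j))⁻¹) := by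
  have hlr : 1 ≤ l r := (hell r hr1).mpr hr2
  have hx' : ∀ i, xq (lDec l r) ell i = xq l ell i - (if i = r then 1 else 0) := by
    intro i
    unfold xq lDec
    by_cases h : i = r
    · subst h
      rw [if_pos rfl, if_pos rfl, Nat.cast_sub hlr]
      ring
    · rw [if_neg h, if_neg h]
      ring
  have hV := Vratio (xq l ell) (xq (lDec l r) ell) ell r hr1 hr2 hx' (xq_ne hmono)
  have hW := Wratio l ell r hr1 hr2 hlr
  have hN0 : (N : ℚ) ≠ 0 := by positivity
  have hfac : (Nat.factorial (N - 1) : ℚ) = (Nat.factorial N : ℚ) * (N : ℚ)⁻¹ := by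
    have hh := Nat.mul_factorial_pred (by omega : N ≠ 0)
    rw [← hh, Nat.cast_mul]
    field_simp
  have hxr_cast : xq l ell r = ((l r + (ell - r) : ℕ) : ℚ) := by
    unfold xq
    rw [Nat.cast_add, Nat.cast_sub hr2]
    ring
  unfold Fq
  rw [hfac, hW, Vq_eq (lDec l r) ell, Vq_eq l ell, hV, ← hxr_cast]
  ring

lemma sum_xq (l : ℕ → ℕ) (ell N : ℕ) (hsum : ∑ i ∈ Finset.Icc 1 ell, l i = N) :
    (∑ i ∈ Finset.Icc 1 ell, xq l ell i) - ((ell.choose 2 : ℕ) : ℚ) = N := by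
  have h1 : (∑ i ∈ Finset.Icc 1 ell, (l i : ℚ)) = N := by
    rw [← Nat.cast_sum]
    exact_mod_cast congrArg (Nat.cast : ℕ → ℚ) hsum
  have h2 : ∀ e : ℕ, (∑ i ∈ Finset.Icc 1 e, ((e : ℚ) - (i : ℚ))) = ((e.choose 2 : ℕ) : ℚ) := by
    intro e
    induction e with
    | zero => simp
    | succ e ih =>
      rw [Finset.sum_Icc_succ_top (by omega)]
      have hcong : ∀ i ∈ Finset.Icc 1 e, (((e + 1 : ℕ) : ℚ) - (i : ℚ))
          = ((e : ℚ) - (i : ℚ)) + 1 := fun i _ => by push_cast; ring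
      rw [Finset.sum_congr rfl hcong, Finset.sum_add_distrib, ih, Finset.sum_const,
        Nat.card_Icc]
      have hch := Nat.choose_succ_succ e 1
      rw [Nat.choose_one_right] at hch
      have hch2 : (e + 1).choose 2 = e + e.choose 2 := hch
      push_cast [hch2]
      simp
      ring
  have h3 : (∑ i ∈ Finset.Icc 1 ell, xq l ell i)
      = (∑ i ∈ Finset.Icc 1 ell, (l i : ℚ)) + ∑ i ∈ Finset.Icc 1 ell, ((ell : ℚ) - (i : ℚ)) := by
    rw [← Finset.sum_add_distrib]
    exact Finset.sum_congr rfl fun i _ => by unfold xq; ring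
  rw [h3, h1, h2 ell]
  ring

theorem frobenius_aux : ∀ N : ℕ, ∀ l : ℕ → ℕ, ∀ ell : ℕ,
    (∀ i j, i ≤ j → l j ≤ l i) → (∀ i, 1 ≤ i → (0 < l i ↔ i ≤ ell)) →
    (∑ i ∈ Finset.Icc 1 ell, l i = N) →
    (Nat.card {T : ℕ × ℕ → ℕ // IsSYT l N T} : ℚ) = Fq l ell N := by
  intro N
  induction N using Nat.strong_induction_on with
  | _ N IH =>
  intro l ell hmono hell hsum
  rcases Nat.eq_zero_or_pos N with hN0 | hN1
  · subst hN0
    have hell0 : ell = 0 := by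
      by_contra h
      have h1 : 0 < l 1 := (hell 1 le_rfl).mpr (by omega)
      have h2 : l 1 ≤ ∑ i ∈ Finset.Icc 1 ell, l i :=
        Finset.single_le_sum (fun i _ => Nat.zero_le _) (Finset.mem_Icc.mpr ⟨le_rfl, by omega⟩)
      omega
    subst hell0
    have hl0 : ∀ i, 1 ≤ i → l i = 0 := fun i hi => by
      have := hell i hi; omega
    have hcells : youngCells l = ∅ := by
      ext ⟨i, j⟩
      simp only [mem_youngCells, Set.mem_empty_iff_false, iff_false]
      intro h
      have := hl0 i h.1
      omega
    have huniq : ∀ T : ℕ × ℕ → ℕ, IsSYT l 0 T ↔ T = fun _ => 0 := by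
      intro T
      constructor
      · intro hT
        funext p
        exact hT.2.2.2 p (by rw [hcells]; exact Set.notMem_empty p)
      · rintro rfl
        refine ⟨?_, ?_, ?_, ?_⟩
        · rw [hcells, show Set.Icc 1 0 = (∅ : Set ℕ) from Set.Icc_eq_empty (by norm_num)]
          exact ⟨fun p hp => absurd hp (Set.notMem_empty p),
            fun p hp => absurd hp (Set.notMem_empty p),
            Set.empty_subset _⟩
        · intro i j h1 _; rw [hcells] at h1; exact absurd h1 (Set.notMem_empty _)
        · intro i j h1 _; rw [hcells] at h1; exact absurd h1 (Set.notMem_empty _)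
        · intro p _; rfl
    have hone : Nat.card {T : ℕ × ℕ → ℕ // IsSYT l 0 T} = 1 := by
      rw [Nat.card_eq_one_iff_unique]
      constructor
      · constructor
        intro a b
        apply Subtype.ext
        rw [(huniq a.1).mp a.2, (huniq b.1).mp b.2]
      · exact ⟨⟨fun _ => 0, (huniq _).mpr rfl⟩⟩
    rw [hone]
    unfold Fq Vq Wq
    rw [show Finset.Icc 1 0 = (∅ : Finset ℕ) from Finset.Icc_eq_empty (by omega)]
    simp [Nat.factorial]
  · set R : Finset ℕ := (Finset.Icc 1 ell).filter (fun r => l (r + 1) < l r) with hR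
    have hell1 : 1 ≤ ell := by
      by_contra h
      have he : ell = 0 := by omega
      subst he
      rw [show Finset.Icc 1 0 = (∅ : Finset ℕ) from Finset.Icc_eq_empty (by omega)] at hsum
      simp at hsum
      omega
    have hRmem : ∀ r ∈ R, 1 ≤ r ∧ r ≤ ell ∧ l (r + 1) < l r ∧ 1 ≤ l r := by
      intro r hr
      rw [hR, Finset.mem_filter, Finset.mem_Icc] at hr
      exact ⟨hr.1.1, hr.1.2, hr.2, (hell r hr.1.1).mpr hr.1.2⟩
    have hmono' : ∀ r ∈ R, ∀ i j, i ≤ j → lDec l r j ≤ lDec l r i := by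
      intro r hr i j hij
      obtain ⟨h1, h2, h3, h4⟩ := hRmem r hr
      unfold lDec
      by_cases hi : i = r <;> by_cases hj : j = r
      · subst hi; subst hj; exact le_refl _
      · subst hi
        rw [if_pos rfl, if_neg hj]
        have := hmono (i + 1) j (by omega)
        omega
      · subst hj
        rw [if_neg hi, if_pos rfl]
        have := hmono i j hij
        omega
      · rw [if_neg hi, if_neg hj]; exact hmono i j hij
    have himp' : ∀ r, ∀ i, 1 ≤ i → 0 < lDec l r i → i ≤ ell := by
      intro r i hi h
      refine (hell i hi).mp ?_
      unfold lDec at h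
      by_cases hir : i = r
      · rw [if_pos hir] at h; omega
      · rw [if_neg hir] at h; omega
    haveI hFin : ∀ r : {r // r ∈ R}, Finite {T : ℕ × ℕ → ℕ // IsSYT (lDec l r.1) (N - 1) T} :=
      fun r => syt_finite (lDec l r.1) (N - 1) ell (hmono' r.1 r.2) (himp' r.1)
    letI : ∀ r : {r // r ∈ R}, Fintype {T : ℕ × ℕ → ℕ // IsSYT (lDec l r.1) (N - 1) T} :=
      fun r => Fintype.ofFinite _
    let g : (Σ r : {r // r ∈ R}, {T : ℕ × ℕ → ℕ // IsSYT (lDec l r.1) (N - 1) T}) →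
        {T : ℕ × ℕ → ℕ // IsSYT l N T} :=
      fun q => ⟨fun p => if p = (q.1.1, l q.1.1) then N else q.2.1 p,
        up_SYT (hRmem q.1.1 q.1.2).1 (hRmem q.1.1 q.1.2).2.2.2 (hRmem q.1.1 q.1.2).2.2.1
          q.2.2 hN1⟩
    have hginj : Function.Injective g := by
      rintro ⟨⟨r, hrR⟩, ⟨T1, hT1⟩⟩ ⟨⟨r', hrR'⟩, ⟨T2, hT2⟩⟩ heq
      have heq' : (fun p => if p = (r, l r) then N else T1 p)
          = (fun p => if p = (r', l r') then N else T2 p) := congrArg Subtype.val heq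
      obtain ⟨ha1, ha2, ha3, ha4⟩ := hRmem r hrR
      obtain ⟨hb1, hb2, hb3, hb4⟩ := hRmem r' hrR'
      have hrr : (r, l r) = (r', l r') := by
        by_contra hne
        have h5 : (if ((r, l r) : ℕ × ℕ) = (r, l r) then N else T1 (r, l r))
            = (if ((r, l r) : ℕ × ℕ) = (r', l r') then N else T2 (r, l r)) :=
          congrFun heq' (r, l r)
        rw [if_pos rfl, if_neg hne] at h5
        by_cases hc : (r, l r) ∈ youngCells (lDec l r')
        · have := hT2.1.mapsTo hc
          simp only [Set.mem_Icc] at this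
          omega
        · have := hT2.2.2.2 _ hc
          omega
      have hreq : r = r' := congrArg Prod.fst hrr
      subst hreq
      have hTT : T1 = T2 := by
        funext p
        by_cases hp : p = (r, l r)
        · subst hp
          have hnotin : (r, l r) ∉ youngCells (lDec l r) := by
            rw [cells_dec l r ha4]
            intro hmem
            exact hmem.2 rfl
          rw [hT1.2.2.2 _ hnotin, hT2.2.2.2 _ hnotin]
        · have h6 : (if p = (r, l r) then N else T1 p)
              = (if p = (r, l r) then N else T2 p) := congrFun heq' p
          rw [if_neg hp, if_neg hp] at h6
          exact h6
      subst hTT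
      rfl
    have hgsurj : Function.Surjective g := by
      rintro ⟨T, hT⟩
      obtain ⟨r, ⟨hr1, hr2, hr3⟩, hTr⟩ := top_cell hmono hell hT hN1
      have hr4 : 1 ≤ l r := (hell r hr1).mpr hr2
      have hrR : r ∈ R := by
        rw [hR, Finset.mem_filter, Finset.mem_Icc]
        exact ⟨⟨hr1, hr2⟩, hr3⟩
      refine ⟨⟨⟨r, hrR⟩, ⟨fun p => if p = (r, l r) then 0 else T p,
        down_SYT hr1 hr4 hT hTr hN1⟩⟩, ?_⟩
      apply Subtype.ext
      funext p
      show (if p = (r, l r) then N else (if p = (r, l r) then 0 else T p)) = T p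
      by_cases hp : p = (r, l r)
      · subst hp
        rw [if_pos rfl]
        exact hTr.symm
      · rw [if_neg hp, if_neg hp]
    have hcard : Nat.card {T : ℕ × ℕ → ℕ // IsSYT l N T}
        = ∑ r ∈ R.attach, Nat.card {T : ℕ × ℕ → ℕ // IsSYT (lDec l r.1) (N - 1) T} := by
      rw [← Nat.card_eq_of_bijective g ⟨hginj, hgsurj⟩, Nat.card_eq_fintype_card,
        Fintype.card_sigma, Finset.univ_eq_attach]
      exact Finset.sum_congr rfl fun r _ => (Nat.card_eq_fintype_card).symm
    have hval : ∀ r ∈ R, (Nat.card {T : ℕ × ℕ → ℕ // IsSYT (lDec l r) (N - 1) T} : ℚ)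
        = Fq (lDec l r) ell (N - 1) := by
      intro r hr
      obtain ⟨h1, h2, h3, h4⟩ := hRmem r hr
      by_cases hcase : r = ell ∧ l r = 1
      · obtain ⟨hre, hl1⟩ := hcase
        subst hre
        have hmono2 := hmono' _ hr
        have hell2 : ∀ i, 1 ≤ i → (0 < lDec l r i ↔ i ≤ r - 1) := by
          intro i hi
          unfold lDec
          by_cases hie : i = r
          · rw [hie, if_pos rfl]
            omega
          · rw [if_neg hie]
            constructor
            · intro h0
              have := (hell i hi).mp h0
              omega
            · intro h0
              exact (hell i hi).mpr (by omega)
        have hsum2 : ∑ i ∈ Finset.Icc 1 (r - 1), lDec l r i = N - 1 := by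
          have he : ∑ i ∈ Finset.Icc 1 ((r - 1) + 1), l i = N := by
            rw [show (r - 1) + 1 = r from by omega]
            exact hsum
          rw [Finset.sum_Icc_succ_top (by omega), show (r - 1) + 1 = r from by omega] at he
          have hcong : ∀ i ∈ Finset.Icc 1 (r - 1), lDec l r i = l i := by
            intro i hi
            rw [Finset.mem_Icc] at hi
            unfold lDec
            rw [if_neg (by omega)]
          rw [Finset.sum_congr rfl hcong]
          have he' : (Finset.Icc 1 (r - 1)).sum l + l r = N := he
          omega
        have hIH := IH (N - 1) (by omega) (lDec l r) (r - 1) hmono2 hell2 hsum2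
        rw [hIH]
        have hm0 : lDec l r ((r - 1) + 1) = 0 := by
          unfold lDec
          rw [show (r - 1) + 1 = r from by omega, if_pos rfl]
          omega
        have hstable := Fq_stable (lDec l r) (r - 1) (N - 1) hm0
        rw [show (r - 1) + 1 = r from by omega] at hstable
        rw [← hstable]
      · have hlDec_pos : ∀ i, 1 ≤ i → (0 < lDec l r i ↔ i ≤ ell) := by
          intro i hi
          unfold lDec
          by_cases hir : i = r
          · subst hir
            rw [if_pos rfl]
            constructor
            · intro h0; omega
            · intro h0
              rcases Nat.lt_or_ge i ell with hlt | hge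
              · have hpos : 0 < l (i + 1) := (hell (i + 1) (by omega)).mpr (by omega)
                omega
              · have hie : i = ell := by omega
                have hne1 : l i ≠ 1 := fun hh => hcase ⟨hie, hh⟩
                omega
          · rw [if_neg hir]; exact hell i hi
        have hsum2 : ∑ i ∈ Finset.Icc 1 ell, lDec l r i = N - 1 := by
          have hrIcc : r ∈ Finset.Icc 1 ell := Finset.mem_Icc.mpr ⟨h1, h2⟩
          rw [← Finset.add_sum_erase _ _ hrIcc]
          rw [← Finset.add_sum_erase _ l hrIcc] at hsum
          have hcong : ∀ i ∈ (Finset.Icc 1 ell).erase r, lDec l r i = l i := by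
            intro i hi
            unfold lDec
            rw [if_neg (Finset.mem_erase.mp hi).1]
          rw [Finset.sum_congr rfl hcong]
          unfold lDec
          rw [if_pos rfl]
          have hsum' : l r + ((Finset.Icc 1 ell).erase r).sum l = N := hsum
          omega
        exact IH (N - 1) (by omega) (lDec l r) ell (hmono' r hr) hlDec_pos hsum2
    have hcast : ((Nat.card {T : ℕ × ℕ → ℕ // IsSYT l N T} : ℕ) : ℚ)
        = ∑ r ∈ R, Fq (lDec l r) ell (N - 1) := by
      rw [hcard]
      push_cast
      rw [Finset.sum_attach R
        (fun r => (Nat.card {T : ℕ × ℕ → ℕ // IsSYT (lDec l r) (N - 1) T} : ℚ))]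
      exact Finset.sum_congr rfl hval
    have hzero : ∀ r ∈ Finset.Icc 1 ell, r ∉ R → Fq (lDec l r) ell (N - 1) = 0 := by
      intro r hrIcc hrR
      rw [Finset.mem_Icc] at hrIcc
      have hnc : ¬ l (r + 1) < l r := by
        intro hc
        exact hrR (by rw [hR, Finset.mem_filter, Finset.mem_Icc]; exact ⟨⟨hrIcc.1, hrIcc.2⟩, hc⟩)
      have hrlt : r < ell := by
        rcases Nat.lt_or_ge r ell with h | h
        · exact h
        · exfalso
          have hre : r = ell := by omega
          have hl1 : 0 < l ell := (hell ell (by omega)).mpr le_rfl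
          have hl2 : l (ell + 1) = 0 := by
            have := hell (ell + 1) (by omega)
            omega
          rw [hre] at hnc
          omega
      rw [Fq_ratio l ell N r hmono hell hrIcc.1 hrIcc.2 hN1]
      have hE : (∏ j ∈ (Finset.Icc 1 ell).erase r, (xq l ell r - xq l ell j - 1)) = 0 := by
        apply Finset.prod_eq_zero (i := r + 1)
        · rw [Finset.mem_erase, Finset.mem_Icc]
          exact ⟨by omega, by omega, by omega⟩
        · have hlre : l (r + 1) = l r := by
            have := hmono r (r + 1) (by omega)
            omega
          unfold xq
          rw [hlre]
          push_cast
          ring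
      rw [hE]
      ring
    have hext : ∑ r ∈ R, Fq (lDec l r) ell (N - 1)
        = ∑ r ∈ Finset.Icc 1 ell, Fq (lDec l r) ell (N - 1) :=
      Finset.sum_subset (Finset.filter_subset _ _) hzero
    have hfinal : ∑ r ∈ Finset.Icc 1 ell, Fq (lDec l r) ell (N - 1) = Fq l ell N := by
      have hTF : ∀ r ∈ Finset.Icc 1 ell, Fq (lDec l r) ell (N - 1)
          = Fq l ell N * (N : ℚ)⁻¹ *
            (xq l ell r * (∏ j ∈ (Finset.Icc 1 ell).erase r, (xq l ell r - xq l ell j - 1))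
              * (∏ j ∈ (Finset.Icc 1 ell).erase r, (xq l ell r - xq l ell j))⁻¹) := by
        intro r hr
        rw [Finset.mem_Icc] at hr
        exact Fq_ratio l ell N r hmono hell hr.1 hr.2 hN1
      rw [Finset.sum_congr rfl hTF, ← Finset.mul_sum]
      have hinj : Set.InjOn (xq l ell) (Finset.Icc 1 ell) := by
        intro i hi j hj hij
        by_contra hne
        exact xq_ne hmono i (by exact_mod_cast hi) j (by exact_mod_cast hj) hne hij
      have hEL := EL (Finset.Icc 1 ell) (xq l ell) hinj
      have hcard_Icc : (Finset.Icc 1 ell).card = ell := by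
        rw [Nat.card_Icc]
        omega
      rw [hcard_Icc] at hEL
      rw [hEL, sum_xq l ell N hsum]
      have hN0 : (N : ℚ) ≠ 0 := by positivity
      field_simp
    calc (Nat.card {T : ℕ × ℕ → ℕ // IsSYT l N T} : ℚ)
        = ∑ r ∈ R, Fq (lDec l r) ell (N - 1) := hcast
      _ = ∑ r ∈ Finset.Icc 1 ell, Fq (lDec l r) ell (N - 1) := hext
      _ = Fq l ell N := hfinal

theorem frobenius_formula
    (N : ℕ) (l : ℕ → ℕ) (hmono : ∀ i j, i ≤ j → l j ≤ l i)
    (ell : ℕ) (hell : ∀ i, 1 ≤ i → (0 < l i ↔ i ≤ ell))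
    (hsum : ∑ i ∈ Finset.Icc 1 ell, l i = N) :
    (Nat.card {T : ℕ × ℕ → ℕ // IsSYT l N T} : ℚ) =
      (Nat.factorial N : ℚ) *
      (∏ j ∈ Finset.Icc 1 ell, ∏ i ∈ Finset.Icc 1 (j - 1),
          ((l i : ℚ) - (l j : ℚ) + (j : ℚ) - (i : ℚ))) *
      (∏ i ∈ Finset.Icc 1 ell, (1 : ℚ) / (Nat.factorial (l i + (ell - i)) : ℚ)) := by
  have h := frobenius_aux N l ell hmono hell hsum
  unfold Fq Vq Wq at h
  exact h
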